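/- Let (X,d) be a locally compact metric space and F a set of isometries of X. Then the set K(F) = {x ∈ X : the orbit F(x) = {f x : f ∈ F} has compact closure} is open in X. -/
import Mathlib


open Function Set Metric Topology

theorem stmt_0 {X : Type*} [MetricSpace X] [LocallyCompactSpace X]
    (F : Set (X → X)) (hF : ∀ f ∈ F, Isometry f ∧ Surjective f) :
    IsOpen {x : X | IsCompact (closure ((fun f => f x) '' F))} := by
  rw [Metric.isOpen_iff]
  intro x hx
  obtain ⟨K', hK', hsub⟩ := exists_compact_superset hx
  obtain ⟨δ, hδ, hthick⟩ := hx.exists_cthickening_subset_open isOpen_interior hsub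
  refine ⟨δ, hδ, fun y hy => ?_⟩
  have hsub2 : (fun f => f y) '' F ⊆ cthickening δ (closure ((fun f => f x) '' F)) := by
    rintro _ ⟨f, hf, rfl⟩
    refine mem_cthickening_of_dist_le _ (f x) _ _ (subset_closure ⟨f, hf, rfl⟩) ?_
    rw [(hF f hf).1.dist_eq]
    exact le_of_lt (by rwa [mem_ball] at hy)
  exact hK'.of_isClosed_subset isClosed_closure
    ((closure_minimal hsub2 (isClosed_cthickening)).trans
      (hthick.trans interior_subset))
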